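/- Define the qubit map Φ : ℂ^{2×2} → ℂ^{2×2} by Φ(X) := σ_x Xᵀ σ_x, where σ_x = [[0,1],[1,0]]. Then Φ is positive and trace-preserving but not 2-positive, tr(Φ) = 2, and for the standard orthonormal basis G = {e₁, e₂} of ℂ² the transition matrix equals T_G = σ_x, so tr(T_G) = 0. In particular, tr(Φ) > c·tr(T_G) for every real constant c, so the inequality tr(Φ) ≤ d·tr(T_G) of the key lemma fails for positive maps that are not 2-positive, regardless of the prefactor. -/

import Mathlib

open Matrix
open scoped ComplexOrder

/-- A linear map on `d × d` complex matrices is *positive* if it sends positive semidefinite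
matrices to positive semidefinite matrices. -/
def IsPosMap {d : ℕ} (Φ : Matrix (Fin d) (Fin d) ℂ → Matrix (Fin d) (Fin d) ℂ) : Prop :=
  ∀ A : Matrix (Fin d) (Fin d) ℂ, A.PosSemidef → (Φ A).PosSemidef

/-- A map on `d × d` complex matrices is *2-positive* if it sends every positive semidefinite
`2d × 2d` block matrix `[[A, B], [C, D]]` to a positive semidefinite block matrix
`[[Φ A, Φ B], [Φ C, Φ D]]`. -/
def IsTwoPos {d : ℕ} (Φ : Matrix (Fin d) (Fin d) ℂ → Matrix (Fin d) (Fin d) ℂ) : Prop :=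
  ∀ A B C D : Matrix (Fin d) (Fin d) ℂ,
    (Matrix.fromBlocks A B C D).PosSemidef →
    (Matrix.fromBlocks (Φ A) (Φ B) (Φ C) (Φ D)).PosSemidef

/-- A map on matrices is *trace-preserving* if `tr (Φ X) = tr X` for all `X`. -/
def IsTracePreserving {d : ℕ} (Φ : Matrix (Fin d) (Fin d) ℂ → Matrix (Fin d) (Fin d) ℂ) : Prop :=
  ∀ X : Matrix (Fin d) (Fin d) ℂ, (Φ X).trace = X.trace

/-- The transition matrix `T_G` of a map `Φ` with respect to a family `g` of vectors:
`(T_G)_{jk} = ⟨g j, Φ(|g k⟩⟨g k|) (g j)⟩`. -/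
noncomputable def transMat {d : ℕ} (Φ : Matrix (Fin d) (Fin d) ℂ → Matrix (Fin d) (Fin d) ℂ)
    (g : Fin d → (Fin d → ℂ)) : Matrix (Fin d) (Fin d) ℂ :=
  Matrix.of fun j k =>
    star (g j) ⬝ᵥ (Φ (Matrix.vecMulVec (g k) (star (g k)))).mulVec (g j)


lemma stdBasis_repr' (M : Matrix (Fin 2) (Fin 2) ℂ) (p : Fin 2 × Fin 2) :
    (Matrix.stdBasis ℂ (Fin 2) (Fin 2)).repr M p = M p.1 p.2 := by
  simp [Matrix.stdBasis, Module.Basis.map_repr, Module.Basis.repr_reindex]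

lemma posSemidef_vecMulVec' {n : Type*} [Fintype n] (v : n → ℂ) :
    (Matrix.vecMulVec v (star v)).PosSemidef := by
  refine Matrix.posSemidef_iff_dotProduct_mulVec.mpr ⟨?_, ?_⟩
  · ext i j
    simp [Matrix.vecMulVec, Matrix.conjTranspose_apply, mul_comm]
  · intro x
    have : star x ⬝ᵥ (Matrix.vecMulVec v (star v)).mulVec x
        = star (star v ⬝ᵥ x) * (star v ⬝ᵥ x) := by
      simp only [dotProduct, Matrix.mulVec, Matrix.vecMulVec_apply,
        Pi.star_apply, Finset.mul_sum, Finset.sum_mul, star_sum, star_mul', star_star]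
      rw [Finset.sum_comm]
      refine Finset.sum_congr rfl fun i _ => Finset.sum_congr rfl fun j _ => ?_
      ring
    rw [this]
    exact star_mul_self_nonneg _

/-- The qubit map Φ(X) = σ_x Xᵀ σ_x is positive and trace-preserving but not 2-positive,
tr(Φ) = 2, and for the standard basis the transition matrix is σ_x with trace 0, so
tr(Φ) > c·tr(T_G) for every real c. -/
theorem key_lemma_fails_for_merely_positive (σx : Matrix (Fin 2) (Fin 2) ℂ)
    (hσ : σx = !![0, 1; 1, 0])
    (Φ : Module.End ℂ (Matrix (Fin 2) (Fin 2) ℂ))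
    (hΦ : ∀ X : Matrix (Fin 2) (Fin 2) ℂ, Φ X = σx * Xᵀ * σx)
    (e : Fin 2 → (Fin 2 → ℂ)) (he : ∀ i, e i = Pi.single i 1) :
    IsPosMap ⇑Φ ∧ IsTracePreserving ⇑Φ ∧ ¬ IsTwoPos ⇑Φ ∧
    LinearMap.trace ℂ (Matrix (Fin 2) (Fin 2) ℂ) Φ = 2 ∧
    transMat ⇑Φ e = σx ∧
    (transMat ⇑Φ e).trace = 0 ∧
    (∀ c : ℝ, (LinearMap.trace ℂ (Matrix (Fin 2) (Fin 2) ℂ) Φ).re >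
      c * (transMat ⇑Φ e).trace.re) := by
  have hσH : σxᴴ = σx := by
    subst hσ; ext i j; fin_cases i <;> fin_cases j <;> simp
  have hσσ : σx * σx = 1 := by
    subst hσ; ext i j; fin_cases i <;> fin_cases j <;> simp [Matrix.mul_apply, Fin.sum_univ_two]
  have htr : LinearMap.trace ℂ (Matrix (Fin 2) (Fin 2) ℂ) Φ = 2 := by
    rw [LinearMap.trace_eq_matrix_trace ℂ (Matrix.stdBasis ℂ (Fin 2) (Fin 2)) Φ]
    rw [Matrix.trace]
    rw [Fintype.sum_prod_type]
    simp only [Matrix.diag_apply, LinearMap.toMatrix_apply, stdBasis_repr',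
      Matrix.stdBasis_eq_single, hΦ, hσ]
    norm_num [Fin.sum_univ_two, Matrix.mul_apply, Matrix.single,
      Matrix.transpose_apply, Matrix.vecMul, dotProduct, Matrix.of_apply]
  have htm : transMat ⇑Φ e = σx := by
    ext j k
    fin_cases j <;> fin_cases k <;>
      simp [transMat, hΦ, hσ, he, Matrix.mulVec, Matrix.vecMul, dotProduct,
        Fin.sum_univ_two, Matrix.vecMulVec_apply, Matrix.mul_apply, Pi.single_apply,
        Matrix.transpose_apply]
  refine ⟨?_, ?_, ?_, htr, htm, ?_, ?_⟩
  · intro A hA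
    rw [hΦ]
    have := (hA.transpose).mul_mul_conjTranspose_same σx
    rwa [hσH] at this
  · intro X
    rw [hΦ, Matrix.trace_mul_cycle, hσσ, Matrix.one_mul,
      Matrix.trace_transpose]
  · intro h
    set v : Fin 2 ⊕ Fin 2 → ℂ := Sum.elim (Pi.single 0 1) (Pi.single 1 1) with hv
    have hin : Matrix.fromBlocks !![(1:ℂ),0;0,0] !![0,1;0,0] !![0,0;1,0] !![0,0;0,1]
        = Matrix.vecMulVec v (star v) := by
      ext i j
      rcases i with i | i <;> rcases j with j | j <;> fin_cases i <;> fin_cases j <;>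
        simp [hv, Matrix.vecMulVec_apply, Pi.single_apply]
    have hps := h _ _ _ _ (hin ▸ posSemidef_vecMulVec' v)
    set x : Fin 2 ⊕ Fin 2 → ℂ := Sum.elim (Pi.single 0 1) (Pi.single 1 (-1)) with hx
    have h2 := hps.dotProduct_mulVec_nonneg x
    have hval : star x ⬝ᵥ (Matrix.fromBlocks (Φ !![(1:ℂ),0;0,0]) (Φ !![0,1;0,0])
        (Φ !![0,0;1,0]) (Φ !![0,0;0,1])).mulVec x = -2 := by
      simp [hx, hΦ, hσ, Matrix.mulVec, dotProduct, Fintype.sum_sum_type,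
        Fin.sum_univ_two, Matrix.fromBlocks, Matrix.mul_apply, Pi.single_apply,
        Matrix.transpose_apply]
      norm_num [Matrix.vecHead, Matrix.vecTail, Matrix.vecMul, dotProduct, Fin.sum_univ_two,
        Matrix.mul_apply]
    rw [hval] at h2
    have : (0:ℝ) ≤ (-2 : ℂ).re := (Complex.le_def.mp h2).1
    norm_num at this
  · rw [htm, hσ]
    simp [Matrix.trace_fin_two]
  · intro c
    rw [htr, htm, hσ]
    simp [Matrix.trace_fin_two]
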